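/- Let p ≥ 6 be an integer, θ = π/p, and let A(p) = (A_yes(p), A_no(p)) be the promise problem over the unary alphabet {a} with A_yes(p) = {a^k : cos²((k mod p)·θ) ≥ 2/3} and A_no(p) = {a^k : cos²((k mod p)·θ) ≤ 1/3}. Then A(p) can be solved with error probability ε = 1/3 by an MO-1QFA with two quantum basis states, but A(p) cannot be solved exactly (with error probability 0) by any MO-1QFA with two quantum basis states. -/

import Mathlib

/-- The first standard basis vector `e₀` of `ℂⁿ`, the initial quantum state. -/
def qInit (n : ℕ) : Fin n → ℂ := fun i => if i.val = 0 then 1 else 0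

/-- Accepting probability of an MO-1QFA over the unary alphabet `{a}` (with
end-marker unitaries `Uc`, `Ud`, symbol unitary `Ua` and accepting basis states
`Qa`) on the input word `a^k`: `‖P_acc · U_$ · U_a^k · U_¢ · e₀‖²`. -/
noncomputable def moAcc {n : ℕ} (Uc Ua Ud : Matrix (Fin n) (Fin n) ℂ)
    (Qa : Finset (Fin n)) (k : ℕ) : ℝ :=
  ∑ i ∈ Qa, ‖((Ud * Ua ^ k * Uc).mulVec (qInit n)) i‖ ^ 2

/-- An MO-1QFA with `n` quantum basis states over the unary alphabet solves the
promise problem `(Ayes, Ano)` with error probability `ε`: each yes-instance is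
accepted with probability `≥ 1 − ε` and each no-instance is rejected with
probability `≥ 1 − ε`. -/
def MOSolves (n : ℕ) (Ayes Ano : Set (List Unit)) (ε : ℝ) : Prop :=
  ∃ (Uc Ua Ud : Matrix (Fin n) (Fin n) ℂ),
    Uc ∈ Matrix.unitaryGroup (Fin n) ℂ ∧
    Ua ∈ Matrix.unitaryGroup (Fin n) ℂ ∧
    Ud ∈ Matrix.unitaryGroup (Fin n) ℂ ∧
    ∃ (Qa : Finset (Fin n)),
      (∀ w ∈ Ayes, 1 - ε ≤ moAcc Uc Ua Ud Qa w.length) ∧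
      (∀ w ∈ Ano, 1 - ε ≤ 1 - moAcc Uc Ua Ud Qa w.length)

/-- `A_yes(p) = {a^k : cos²((k mod p)·π/p) ≥ 2/3}`. -/
def AyesP (p : ℕ) : Set (List Unit) :=
  {w | (2 : ℝ) / 3 ≤ Real.cos ((w.length % p : ℕ) * (Real.pi / p)) ^ 2}

/-- `A_no(p) = {a^k : cos²((k mod p)·π/p) ≤ 1/3}`. -/
def AnoP (p : ℕ) : Set (List Unit) :=
  {w | Real.cos ((w.length % p : ℕ) * (Real.pi / p)) ^ 2 ≤ (1 : ℝ) / 3}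

noncomputable def rot (φ : ℝ) : Matrix (Fin 2) (Fin 2) ℂ :=
  !![(Real.cos φ : ℂ), -(Real.sin φ : ℂ); (Real.sin φ : ℂ), (Real.cos φ : ℂ)]

lemma rot_mul (φ ψ : ℝ) : rot φ * rot ψ = rot (φ + ψ) := by
  simp only [rot, Matrix.mul_fin_two, Real.cos_add, Real.sin_add]
  congr 1 <;> push_cast <;> ring

lemma rot_zero : rot 0 = 1 := by
  simp [rot, Matrix.one_fin_two]

lemma rot_star (φ : ℝ) : star (rot φ) = rot (-φ) := by
  ext i j
  fin_cases i <;> fin_cases j <;>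
    simp [rot, Matrix.conjTranspose_apply, ← Complex.ofReal_cos, ← Complex.ofReal_sin,
      Complex.conj_ofReal]

lemma rot_mem (φ : ℝ) : rot φ ∈ Matrix.unitaryGroup (Fin 2) ℂ := by
  rw [Matrix.mem_unitaryGroup_iff, rot_star, rot_mul, add_neg_cancel, rot_zero]

lemma rot_pow (φ : ℝ) (k : ℕ) : (rot φ) ^ k = rot (k * φ) := by
  induction k with
  | zero => simp [rot_zero]
  | succ n ih =>
    rw [pow_succ, ih, rot_mul]; congr 1; push_cast; ring

lemma moAcc_rot (φ : ℝ) (k : ℕ) :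
    moAcc 1 (rot φ) 1 {0} k = Real.cos (k * φ) ^ 2 := by
  rw [moAcc]
  rw [Finset.sum_singleton, rot_pow, one_mul, mul_one]
  have : ((rot (k * φ)).mulVec (qInit 2)) 0 = (Real.cos (k * φ) : ℂ) := by
    simp [Matrix.mulVec, dotProduct, Fin.sum_univ_two, rot, qInit, Matrix.vecHead, Matrix.vecTail]
  rw [this, Complex.norm_real, Real.norm_eq_abs, sq_abs]

lemma cos_sq_add_nat_mul_pi (x : ℝ) (n : ℕ) :
    Real.cos (x + n * Real.pi) ^ 2 = Real.cos x ^ 2 := by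
  induction n with
  | zero => simp
  | succ m ih =>
    have : x + (m + 1 : ℕ) * Real.pi = (x + m * Real.pi) + Real.pi := by push_cast; ring
    rw [this, Real.cos_add_pi, neg_sq, ih]

lemma cos_sq_mod (p k : ℕ) (hp : 0 < p) :
    Real.cos ((k : ℝ) * (Real.pi / p)) ^ 2
      = Real.cos (((k % p : ℕ) : ℝ) * (Real.pi / p)) ^ 2 := by
  have hk : (k : ℝ) = ((k % p : ℕ) : ℝ) + ((k / p : ℕ) : ℝ) * p := by
    rw [← Nat.cast_mul, ← Nat.cast_add, Nat.mod_add_div']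
  have hp' : (p : ℝ) ≠ 0 := Nat.cast_ne_zero.mpr hp.ne'
  have : (k : ℝ) * (Real.pi / p)
      = ((k % p : ℕ) : ℝ) * (Real.pi / p) + ((k / p : ℕ) : ℝ) * Real.pi := by
    rw [hk]; field_simp
  rw [this, cos_sq_add_nat_mul_pi]

lemma exists_no_k (p : ℕ) (hp : 6 ≤ p) :
    ∃ k : ℕ, Real.cos (((k % p : ℕ) : ℝ) * (Real.pi / p)) ^ 2 ≤ (1 : ℝ) / 3 := by
  rcases Nat.even_or_odd p with ⟨m, hm⟩ | ⟨m, hm⟩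
  · -- p = 2m
    refine ⟨m, ?_⟩
    have hm3 : 3 ≤ m := by omega
    have hmod : m % p = m := Nat.mod_eq_of_lt (by omega)
    have hm0 : (m : ℝ) ≠ 0 := by positivity
    have : ((m : ℕ) : ℝ) * (Real.pi / p) = Real.pi / 2 := by
      rw [hm]; push_cast; field_simp; ring
    rw [hmod, this, Real.cos_pi_div_two]
    norm_num
  · -- p = 2m+1
    refine ⟨m + 1, ?_⟩
    have hm3 : 3 ≤ m := by omega
    have hmod : (m + 1) % p = m + 1 := Nat.mod_eq_of_lt (by omega)
    have hp0 : (p : ℝ) ≠ 0 := by positivity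
    set t : ℝ := Real.pi / (2 * p) with ht
    have harg : ((m + 1 : ℕ) : ℝ) * (Real.pi / p) = Real.pi / 2 + t := by
      rw [hm, ht, hm]; push_cast; field_simp; ring
    have ht0 : 0 ≤ t := by rw [ht]; positivity
    have htpi : t ≤ Real.pi := by
      rw [ht]
      rw [div_le_iff₀ (by positivity)]
      have hp1 : (1:ℝ) ≤ p := by exact_mod_cast (by omega : 1 ≤ p)
      nlinarith [Real.pi_pos]
    have hcos : Real.cos (((m + 1 : ℕ) : ℝ) * (Real.pi / p)) = - Real.sin t := by
      rw [harg, Real.cos_add, Real.cos_pi_div_two, Real.sin_pi_div_two]; ring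
    rw [hmod] at *
    rw [hcos, neg_sq]
    have hsl : Real.sin t ≤ t := Real.sin_le ht0
    have hsn : 0 ≤ Real.sin t := Real.sin_nonneg_of_nonneg_of_le_pi ht0 htpi
    have htb : t ≤ 2 / 7 := by
      rw [ht, div_le_iff₀ (by positivity)]
      have hp7 : (7 : ℝ) ≤ p := by exact_mod_cast (by omega : 7 ≤ p)
      nlinarith [Real.pi_le_four]
    nlinarith

lemma dot_self_eq {n : ℕ} (v : Fin n → ℂ) :
    dotProduct (star v) v = ((∑ i, ‖v i‖ ^ 2 : ℝ) : ℂ) := by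
  rw [dotProduct]
  push_cast
  refine Finset.sum_congr rfl fun i _ => ?_
  rw [Pi.star_apply, Complex.star_def, mul_comm, Complex.mul_conj']

lemma norm_pres {n : ℕ} {M : Matrix (Fin n) (Fin n) ℂ}
    (hM : M ∈ Matrix.unitaryGroup (Fin n) ℂ) (v : Fin n → ℂ) :
    ∑ i, ‖(M.mulVec v) i‖ ^ 2 = ∑ i, ‖v i‖ ^ 2 := by
  have h1 : dotProduct (star (M.mulVec v)) (M.mulVec v)
      = dotProduct (star v) v := by
    rw [Matrix.star_mulVec, Matrix.dotProduct_mulVec, Matrix.vecMul_vecMul]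
    rw [show M.conjTranspose * M = 1 from Matrix.mem_unitaryGroup_iff'.mp hM]
    rw [Matrix.vecMul_one]
  rw [dot_self_eq, dot_self_eq] at h1
  exact_mod_cast h1

lemma det_zero_of_orth (r0 r1 x0 x1 y0 y1 : ℂ) (hr : ¬(r0 = 0 ∧ r1 = 0))
    (h1 : r0 * x0 + r1 * x1 = 0) (h2 : r0 * y0 + r1 * y1 = 0) :
    x0 * y1 - x1 * y0 = 0 := by
  by_cases h0 : r0 = 0
  · have hr1 : r1 ≠ 0 := fun h => hr ⟨h0, h⟩
    have key : r1 * (x0 * y1 - x1 * y0) = 0 := by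
      rw [h0] at h1 h2
      linear_combination x0 * h2 - y0 * h1
    rcases mul_eq_zero.mp key with h | h
    · exact absurd h hr1
    · exact h
  · have key : r0 * (x0 * y1 - x1 * y0) = 0 := by
      linear_combination y1 * h1 - x1 * h2
    rcases mul_eq_zero.mp key with h | h
    · exact absurd h h0
    · exact h

lemma exists_scalar (x y : Fin 2 → ℂ) (hdet : x 0 * y 1 - x 1 * y 0 = 0)
    (hx : x ≠ 0) : ∃ l : ℂ, y = l • x := by
  by_cases h0 : x 0 = 0
  · have h1 : x 1 ≠ 0 := by
      intro h
      apply hx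
      funext i
      fin_cases i
      · exact h0
      · exact h
    have hy0 : y 0 = 0 := by
      have key : x 1 * y 0 = 0 := by linear_combination y 1 * h0 - hdet
      rcases mul_eq_zero.mp key with h | h
      · exact absurd h h1
      · exact h
    refine ⟨y 1 / x 1, funext fun i => ?_⟩
    fin_cases i
    · show y 0 = y 1 / x 1 * x 0
      rw [h0, hy0, mul_zero]
    · show y 1 = y 1 / x 1 * x 1
      field_simp
  · refine ⟨y 0 / x 0, funext fun i => ?_⟩
    fin_cases i
    · show y 0 = y 0 / x 0 * x 0
      field_simp
    · show y 1 = y 0 / x 0 * x 1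
      rw [div_mul_eq_mul_div, eq_div_iff h0]
      linear_combination hdet

lemma eigen_aux {Ud Ua : Matrix (Fin 2) (Fin 2) ℂ}
    (hUd : Ud ∈ Matrix.unitaryGroup (Fin 2) ℂ)
    (x : Fin 2 → ℂ) (hx : x ≠ 0) (j : Fin 2)
    (hj0 : (Ud.mulVec x) j = 0) (hj1 : (Ud.mulVec (Ua.mulVec x)) j = 0) :
    ∀ k : ℕ, (Ud.mulVec ((Ua ^ k).mulVec x)) j = 0 := by
  have hrow : ¬(Ud j 0 = 0 ∧ Ud j 1 = 0) := by
    rintro ⟨ha, hb⟩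
    have h1 : (Ud * star Ud) j j = 1 := by
      rw [Matrix.mem_unitaryGroup_iff.mp hUd, Matrix.one_apply_eq]
    rw [Matrix.mul_apply, Fin.sum_univ_two, Matrix.star_apply, Matrix.star_apply,
      ha, hb] at h1
    simp at h1
  have hmv : ∀ v : Fin 2 → ℂ, (Ud.mulVec v) j = Ud j 0 * v 0 + Ud j 1 * v 1 := by
    intro v
    rw [Matrix.mulVec, dotProduct, Fin.sum_univ_two]
  rw [hmv] at hj0 hj1
  have hdet := det_zero_of_orth (Ud j 0) (Ud j 1) (x 0) (x 1)
    ((Ua.mulVec x) 0) ((Ua.mulVec x) 1) hrow hj0 hj1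
  obtain ⟨l, hl⟩ := exists_scalar x (Ua.mulVec x) hdet hx
  have hpow : ∀ k : ℕ, (Ua ^ k).mulVec x = l ^ k • x := by
    intro k
    induction k with
    | zero => simp [Matrix.one_mulVec]
    | succ n ih =>
      rw [pow_succ, ← Matrix.mulVec_mulVec, hl, Matrix.mulVec_smul, ih,
        smul_smul, pow_succ, mul_comm]
  intro k
  rw [hpow, Matrix.mulVec_smul, Pi.smul_apply, hmv, hj0]
  simp

/-- for `p ≥ 6`, the promise problem `A(p)` can be solved with
error probability `1/3` by an MO-1QFA with two quantum basis states, but cannot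
be solved exactly (error probability `0`) by any MO-1QFA with two quantum basis
states. -/
theorem two_state_qfa_solves_not_exactly (p : ℕ) (hp : 6 ≤ p) :
    MOSolves 2 (AyesP p) (AnoP p) (1 / 3) ∧
    ¬ MOSolves 2 (AyesP p) (AnoP p) 0 := by
  have hp0 : 0 < p := by omega
  constructor
  · -- solvability with error 1/3
    refine ⟨1, rot (Real.pi / p), 1, one_mem _, rot_mem _, one_mem _, {0}, ?_, ?_⟩
    · intro w hw
      simp only [AyesP, Set.mem_setOf_eq] at hw
      rw [moAcc_rot, cos_sq_mod p w.length hp0]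
      linarith
    · intro w hw
      simp only [AnoP, Set.mem_setOf_eq] at hw
      rw [moAcc_rot, cos_sq_mod p w.length hp0]
      linarith
  · -- impossibility of exact solution
    rintro ⟨Uc, Ua, Ud, hUc, hUa, hUd, Qa, hyes, hno⟩
    set u : ℕ → Fin 2 → ℂ := fun k => (Ud * Ua ^ k * Uc).mulVec (qInit 2) with hu
    have hqnorm : ∑ i, ‖qInit 2 i‖ ^ 2 = (1 : ℝ) := by
      rw [Fin.sum_univ_two]; simp [qInit]
    have hmoAcc : ∀ k, moAcc Uc Ua Ud Qa k = ∑ i ∈ Qa, ‖u k i‖ ^ 2 := fun k => rfl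
    have hTot : ∀ k, ∑ i, ‖u k i‖ ^ 2 = 1 := by
      intro k
      have hmem : Ud * Ua ^ k * Uc ∈ Matrix.unitaryGroup (Fin 2) ℂ :=
        mul_mem (mul_mem hUd (pow_mem hUa k)) hUc
      rw [hu]
      rw [norm_pres hmem, hqnorm]
    have hsplit : ∀ k, ∑ i ∈ Qa, ‖u k i‖ ^ 2 + ∑ i ∈ Qaᶜ, ‖u k i‖ ^ 2 = 1 := by
      intro k
      rw [Finset.sum_add_sum_compl, hTot]
    have h0yes : ([] : List Unit) ∈ AyesP p := by
      simp only [AyesP, Set.mem_setOf_eq, List.length_nil, Nat.zero_mod, Nat.cast_zero,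
        zero_mul, Real.cos_zero]
      norm_num
    have h1yes : ([()] : List Unit) ∈ AyesP p := by
      simp only [AyesP, Set.mem_setOf_eq, List.length_singleton]
      rw [Nat.mod_eq_of_lt (by omega), Nat.cast_one, one_mul]
      have h1 : Real.pi / p ≤ Real.pi / 6 := by
        apply div_le_div_of_nonneg_left Real.pi_pos.le (by norm_num)
        exact_mod_cast hp
      have h2 : Real.cos (Real.pi / 6) ≤ Real.cos (Real.pi / p) := by
        apply Real.cos_le_cos_of_nonneg_of_le_pi (by positivity) _ h1
        linarith [Real.pi_pos]
      have h3 : (0 : ℝ) ≤ Real.cos (Real.pi / 6) := by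
        rw [Real.cos_pi_div_six]; positivity
      have h4 : Real.cos (Real.pi / 6) ^ 2 ≤ Real.cos (Real.pi / p) ^ 2 :=
        pow_le_pow_left₀ h3 h2 2
      have h5 : Real.cos (Real.pi / 6) ^ 2 = 3 / 4 := by
        rw [Real.cos_pi_div_six, div_pow, Real.sq_sqrt (by norm_num : (0:ℝ) ≤ 3)]
        norm_num
      linarith
    have hacc0 := hyes [] h0yes
    have hacc1 := hyes [()] h1yes
    simp only [List.length_nil, List.length_singleton, sub_zero] at hacc0 hacc1
    obtain ⟨kk, hkk⟩ := exists_no_k p hp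
    have hkno : List.replicate kk () ∈ AnoP p := by
      simp only [AnoP, Set.mem_setOf_eq, List.length_replicate]
      exact hkk
    have haccK := hno _ hkno
    simp only [List.length_replicate, sub_zero] at haccK
    have haccK' : moAcc Uc Ua Ud Qa kk ≤ 0 := by linarith
    have sum_zero : ∀ (s : Finset (Fin 2)) (k : ℕ),
        (∑ i ∈ s, ‖u k i‖ ^ 2) ≤ 0 → ∀ i ∈ s, u k i = 0 := by
      intro s k hle i hi
      have hnn : ∀ i ∈ s, (0 : ℝ) ≤ ‖u k i‖ ^ 2 := fun _ _ => by positivity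
      have hz := (Finset.sum_eq_zero_iff_of_nonneg hnn).mp
        (le_antisymm hle (Finset.sum_nonneg hnn)) i hi
      have h : ‖u k i‖ = 0 := by nlinarith [norm_nonneg (u k i)]
      exact norm_eq_zero.mp h
    have hcompl : ∀ k', 1 ≤ moAcc Uc Ua Ud Qa k' → ∀ i ∉ Qa, u k' i = 0 := by
      intro k' hk' i hi
      refine sum_zero Qaᶜ k' ?_ i (Finset.mem_compl.mpr hi)
      rw [hmoAcc] at hk'
      linarith [hsplit k']
    have hmemz : ∀ i ∈ Qa, u kk i = 0 := by
      refine sum_zero Qa kk ?_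
      rw [← hmoAcc]
      exact haccK'
    set x := Uc.mulVec (qInit 2) with hxdef
    have hx0 : x ≠ 0 := by
      intro h
      have h1 : ∑ i, ‖x i‖ ^ 2 = 1 := by rw [hxdef, norm_pres hUc, hqnorm]
      rw [h] at h1
      simp at h1
    have hux : ∀ k', u k' = Ud.mulVec ((Ua ^ k').mulVec x) := by
      intro k'
      rw [hu]
      show (Ud * Ua ^ k' * Uc).mulVec (qInit 2) = _
      rw [hxdef, Matrix.mulVec_mulVec, Matrix.mulVec_mulVec, mul_assoc]
    have hQ : Qa = ∅ ∨ Qa = {0} ∨ Qa = {1} ∨ Qa = Finset.univ := by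
      have h : ∀ Q : Finset (Fin 2), Q = ∅ ∨ Q = {0} ∨ Q = {1} ∨ Q = Finset.univ := by decide
      exact h Qa
    rcases hQ with hQ | hQ | hQ | hQ
    · rw [hmoAcc, hQ, Finset.sum_empty] at hacc0
      linarith
    · -- Qa = {0}, complement index 1
      have hj0 : u 0 1 = 0 := hcompl 0 hacc0 1 (by rw [hQ]; decide)
      have hj1 : u 1 1 = 0 := hcompl 1 hacc1 1 (by rw [hQ]; decide)
      rw [hux, pow_zero, Matrix.one_mulVec] at hj0
      rw [hux, pow_one] at hj1
      have hall := eigen_aux hUd x hx0 1 hj0 hj1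
      have hq0 : u kk 0 = 0 := hmemz 0 (by rw [hQ]; decide)
      have hq1 : u kk 1 = 0 := by rw [hux]; exact hall kk
      have hzero : ∑ i, ‖u kk i‖ ^ 2 = 0 := by
        rw [Fin.sum_univ_two, hq0, hq1]; simp
      rw [hTot kk] at hzero
      norm_num at hzero
    · -- Qa = {1}, complement index 0
      have hj0 : u 0 0 = 0 := hcompl 0 hacc0 0 (by rw [hQ]; decide)
      have hj1 : u 1 0 = 0 := hcompl 1 hacc1 0 (by rw [hQ]; decide)
      rw [hux, pow_zero, Matrix.one_mulVec] at hj0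
      rw [hux, pow_one] at hj1
      have hall := eigen_aux hUd x hx0 0 hj0 hj1
      have hq1 : u kk 1 = 0 := hmemz 1 (by rw [hQ]; decide)
      have hq0 : u kk 0 = 0 := by rw [hux]; exact hall kk
      have hzero : ∑ i, ‖u kk i‖ ^ 2 = 0 := by
        rw [Fin.sum_univ_two, hq0, hq1]; simp
      rw [hTot kk] at hzero
      norm_num at hzero
    · rw [hmoAcc, hQ] at haccK'
      have := hTot kk
      linarith
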